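/- Under the substitution z = u/(1+u)², the generating function R_k(z) = (1-z)z^{k-2}R₀(z)³/(1+z^{k-2}R₀(z)³) with R₀(z) = (1-√(1-4z))/2 becomes R_k(u/(1+u)²) = ((1-u³)/((1-u)(1+u)²)) · (u^{k+1}/(1+u)^{2k-1}) / (1 + u^{k+1}/(1+u)^{2k-1}). -/
import Mathlib


/-- Under the substitution `z = u/(1+u)²`, the closed form
`R_k(z) = (1-z)z^{k-2}R₀(z)³/(1+z^{k-2}R₀(z)³)` with `R₀(z) = (1-√(1-4z))/2` becomes
`((1-u³)/((1-u)(1+u)²)) · (u^{k+1}/(1+u)^{2k-1}) / (1 + u^{k+1}/(1+u)^{2k-1})`. -/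
theorem substitution_Rk (k : ℕ) (hk : 1 ≤ k) (u : ℝ) (hu0 : 0 < |u|) (hu : |u| < 1) :
    (1 - u / (1 + u) ^ 2) * (u / (1 + u) ^ 2) ^ ((k : ℤ) - 2) *
        ((1 - Real.sqrt (1 - 4 * (u / (1 + u) ^ 2))) / 2) ^ 3 /
      (1 + (u / (1 + u) ^ 2) ^ ((k : ℤ) - 2) *
        ((1 - Real.sqrt (1 - 4 * (u / (1 + u) ^ 2))) / 2) ^ 3) =
      (1 - u ^ 3) / ((1 - u) * (1 + u) ^ 2) *
        (u ^ (k + 1) / (1 + u) ^ (2 * k - 1)) /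
        (1 + u ^ (k + 1) / (1 + u) ^ (2 * k - 1)) := by
  obtain ⟨m, rfl⟩ : ∃ m, k = m + 1 := ⟨k - 1, (Nat.succ_pred_eq_of_pos hk).symm⟩
  have hu' : u ≠ 0 := fun h => by simp [h] at hu0
  have h1 : -1 < u := (abs_lt.mp hu).1
  have h2 : u < 1 := (abs_lt.mp hu).2
  have hp : (0:ℝ) < 1 + u := by linarith
  have hq : (0:ℝ) < 1 - u := by linarith
  have hp' : (1:ℝ) + u ≠ 0 := ne_of_gt hp
  -- the square root simplifies
  have hsq : 1 - 4 * (u / (1 + u) ^ 2) = ((1 - u) / (1 + u)) ^ 2 := by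
    field_simp; ring
  have hroot : Real.sqrt (1 - 4 * (u / (1 + u) ^ 2)) = (1 - u) / (1 + u) := by
    rw [hsq, Real.sqrt_sq (by positivity)]
  have hR : (1 - Real.sqrt (1 - 4 * (u / (1 + u) ^ 2))) / 2 = u / (1 + u) := by
    rw [hroot]; field_simp; ring
  rw [hR]
  have hv : u / (1 + u) ^ 2 ≠ 0 := by positivity
  -- simplify the exponent
  have he : ((m + 1 : ℕ) : ℤ) - 2 = (m : ℤ) - 1 := by push_cast; ring
  have hA : (u / (1 + u) ^ 2) ^ (((m + 1 : ℕ) : ℤ) - 2) * (u / (1 + u)) ^ 3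
      = u ^ (m + 1 + 1) / (1 + u) ^ (2 * (m + 1) - 1) := by
    rw [he, zpow_sub_one₀ hv, zpow_natCast]
    have : 2 * (m + 1) - 1 = 2 * m + 1 := by omega
    rw [this]
    rw [div_pow, div_pow, ← pow_mul]
    field_simp
    ring
  rw [hA]
  have hz : 1 - u / (1 + u) ^ 2 = (1 - u ^ 3) / ((1 - u) * (1 + u) ^ 2) := by
    field_simp; ring
  rw [hz]
  rw [mul_assoc, hA, ← mul_div_assoc]
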